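/- Let $S_n$ be the $n\times n$ circulant-type matrix ($n\geq 3$) with diagonal entries $a$, superdiagonal entries $b$, subdiagonal entries $c$, top-right corner entry $c$, and bottom-left corner entry $b$. If $x_1, x_2$ are the roots of $x^2 - ax + bc = 0$, then $\det(S_n) = x_1^n + x_2^n + (-1)^{n+1}(b^n + c^n)$. -/

import Mathlib

open Matrix
open Finset Polynomial

private lemma pow_mod_eq {ω : ℂ} {n : ℕ} (h : ω ^ n = 1) (m : ℕ) : ω ^ m = ω ^ (m % n) := by
  conv_lhs => rw [← Nat.div_add_mod m n]
  rw [pow_add, pow_mul, h, one_pow, one_mul]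

private lemma prod_z_sub {n : ℕ} (hn : 0 < n) {ω : ℂ} (hω : IsPrimitiveRoot ω n) (z : ℂ) :
    ∏ k : Fin n, (z - ω ^ (k : ℕ)) = z ^ n - 1 := by
  have : NeZero n := ⟨hn.ne'⟩
  have himg : Polynomial.nthRootsFinset n (1 : ℂ) = (Finset.range n).image (fun k => ω ^ k) := by
    ext x
    simp only [Polynomial.mem_nthRootsFinset hn (1 : ℂ), Finset.mem_image, Finset.mem_range]
    constructor
    · intro hx
      obtain ⟨i, hi, hix⟩ := hω.eq_pow_of_pow_eq_one hx
      exact ⟨i, hi, hix⟩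
    · rintro ⟨i, hi, rfl⟩
      rw [← pow_mul, mul_comm, pow_mul, hω.pow_eq_one, one_pow]
  have hpoly := Polynomial.X_pow_sub_one_eq_prod hn hω
  have hev := congrArg (Polynomial.eval z) hpoly
  simp only [Polynomial.eval_sub, Polynomial.eval_pow, Polynomial.eval_X, Polynomial.eval_one,
    Polynomial.eval_prod, Polynomial.eval_C] at hev
  rw [himg, Finset.prod_image (fun i hi j hj hij =>
    hω.pow_inj (Finset.mem_range.mp hi) (Finset.mem_range.mp hj) hij)] at hev
  rw [Fin.prod_univ_eq_prod_range (fun i => z - ω ^ i) n, ← hev]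


/-- Determinant of the circulant-type matrix `S_n` (`n ≥ 3`) with diagonal `a`,
superdiagonal `b`, subdiagonal `c`, corner entries `c` (top-right) and `b`
(bottom-left), where `x1, x2` are the roots of `x^2 - a x + b c = 0`
(encoded via Vieta's formulas). -/
theorem det_circulant_type (n : ℕ) (hn : 3 ≤ n) (a b c x1 x2 : ℂ)
    (hsum : x1 + x2 = a) (hprod : x1 * x2 = b * c) :
    (Matrix.of (fun i j : Fin n =>
      if (i : ℕ) = (j : ℕ) then a
      else if (j : ℕ) = (i : ℕ) + 1 then b
      else if (i : ℕ) = (j : ℕ) + 1 then c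
      else if (i : ℕ) = 0 ∧ (j : ℕ) = n - 1 then c
      else if (i : ℕ) = n - 1 ∧ (j : ℕ) = 0 then b
      else 0)).det
      = x1 ^ n + x2 ^ n + (-1) ^ (n + 1) * (b ^ n + c ^ n) := by
  have hn0 : 0 < n := by omega
  have hnz : NeZero n := ⟨by omega⟩
  -- basic Fin n facts
  have hval1 : ((1 : Fin n) : ℕ) = 1 := by
    obtain ⟨m, rfl⟩ : ∃ m, n = m + 2 := ⟨n - 2, by omega⟩
    exact Fin.val_one _
  have hvalm1 : ((-1 : Fin n) : ℕ) = n - 1 := by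
    obtain ⟨m, rfl⟩ : ∃ m, n = m + 1 := ⟨n - 1, by omega⟩
    simp [Fin.coe_neg_one]
  have h10 : (1 : Fin n) ≠ 0 := by
    rw [Fin.ne_iff_vne, hval1]; simp
  have hm0 : (-1 : Fin n) ≠ 0 := by
    rw [Fin.ne_iff_vne, hvalm1]; simp; omega
  have hm1 : (-1 : Fin n) ≠ 1 := by
    rw [Fin.ne_iff_vne, hvalm1, hval1]; omega
  -- successor characterization
  have key : ∀ p q : Fin n, q = p + 1 ↔
      ((q : ℕ) = (p : ℕ) + 1 ∨ ((p : ℕ) = n - 1 ∧ (q : ℕ) = 0)) := by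
    intro p q
    rw [Fin.ext_iff, Fin.val_add, hval1]
    have hp := p.isLt; have hq := q.isLt
    rcases Nat.lt_or_ge ((p : ℕ) + 1) n with h | h
    · rw [Nat.mod_eq_of_lt h]; omega
    · have hpn : (p : ℕ) + 1 = n := by omega
      rw [hpn, Nat.mod_self]; omega
  set ω : ℂ := Complex.exp (2 * Real.pi * Complex.I / n) with hωdef
  have hω : IsPrimitiveRoot ω n := Complex.isPrimitiveRoot_exp n (by omega)
  have hω1 : ω ^ n = 1 := hω.pow_eq_one
  set E : Fin n → ℂ := fun t => ω ^ (t : ℕ) with hEdef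
  have hEadd : ∀ s t : Fin n, E (s + t) = E s * E t := by
    intro s t
    show ω ^ ((s + t : Fin n) : ℕ) = ω ^ (s : ℕ) * ω ^ (t : ℕ)
    rw [Fin.val_add, ← pow_mod_eq hω1, pow_add]
  have hEmul : ∀ s t : Fin n, ω ^ ((s : ℕ) * (t : ℕ)) = E (s * t) := by
    intro s t
    show _ = ω ^ ((s * t : Fin n) : ℕ)
    rw [Fin.val_mul, ← pow_mod_eq hω1]
  have hE0 : E 0 = 1 := by simp [hEdef]
  set v : Fin n → ℂ := fun t => if t = 0 then a else if t = 1 then b else if t = -1 then c else 0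
    with hvdef
  have hv0 : v 0 = a := by simp [hvdef]
  have hv1 : v 1 = b := by simp [hvdef, h10]
  have hvm : v (-1) = c := by simp [hvdef, hm0, hm1]
  -- the matrix is "circulant"
  have hM : (Matrix.of (fun i j : Fin n =>
      if (i : ℕ) = (j : ℕ) then a
      else if (j : ℕ) = (i : ℕ) + 1 then b
      else if (i : ℕ) = (j : ℕ) + 1 then c
      else if (i : ℕ) = 0 ∧ (j : ℕ) = n - 1 then c
      else if (i : ℕ) = n - 1 ∧ (j : ℕ) = 0 then b
      else 0)) = Matrix.of (fun i j : Fin n => v (j - i)) := by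
    ext i j
    simp only [Matrix.of_apply]
    have h0 : (i : ℕ) = (j : ℕ) ↔ j - i = 0 := by
      rw [sub_eq_zero, Fin.val_eq_val, eq_comm]
    have h1 : j - i = 1 ↔ j = i + 1 := by
      rw [sub_eq_iff_eq_add, add_comm]
    have h2 : j - i = -1 ↔ i = j + 1 := by
      rw [sub_eq_iff_eq_add]
      constructor <;> intro h <;> rw [h] <;> abel
    have hin := i.isLt; have hjn := j.isLt
    split_ifs with hij hsup hsub hc1 hc2
    · rw [(h0.mp hij), hv0]
    · have : j - i = 1 := h1.mpr ((key i j).mpr (Or.inl hsup))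
      rw [this, hv1]
    · have : j - i = -1 := h2.mpr ((key j i).mpr (Or.inl hsub))
      rw [this, hvm]
    · have : j - i = -1 := h2.mpr ((key j i).mpr (Or.inr ⟨hc1.2, hc1.1⟩))
      rw [this, hvm]
    · have : j - i = 1 := h1.mpr ((key i j).mpr (Or.inr ⟨hc2.1, hc2.2⟩))
      rw [this, hv1]
    · have kz : j - i ≠ 0 := fun h => hij (h0.mpr h)
      have k1 : j - i ≠ 1 := by
        intro h
        rcases (key i j).mp (h1.mp h) with h' | h'
        · exact hsup h'
        · exact hc2 ⟨h'.1, h'.2⟩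
      have km : j - i ≠ -1 := by
        intro h
        rcases (key j i).mp (h2.mp h) with h' | h'
        · exact hsub h'
        · exact hc1 ⟨h'.2, h'.1⟩
      simp [hvdef, kz, k1, km]
  rw [hM]
  set F : Matrix (Fin n) (Fin n) ℂ := Matrix.vandermonde (fun i : Fin n => ω ^ (i : ℕ)) with hFdef
  have hF : ∀ i k : Fin n, F i k = E (i * k) := by
    intro i k
    rw [hFdef, Matrix.vandermonde_apply, ← pow_mul]
    exact hEmul i k
  set d : Fin n → ℂ := fun k => a + b * E k + c * E (-k) with hddef
  have sum_v : ∀ g : Fin n → ℂ, ∑ t, v t * g t = a * g 0 + b * g 1 + c * g (-1) := by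
    intro g
    have hsplit : ∀ t : Fin n, v t * g t =
        (if t = 0 then a * g t else 0) + ((if t = 1 then b * g t else 0) +
          (if t = -1 then c * g t else 0)) := by
      intro t
      by_cases ht0 : t = 0
      · subst ht0; simp [hvdef, Ne.symm h10, Ne.symm hm0]
      · by_cases ht1 : t = 1
        · subst ht1; simp [hvdef, h10, Ne.symm hm1]
        · by_cases htm : t = -1
          · subst htm; simp [hvdef, hm0, hm1]
          · simp [hvdef, ht0, ht1, htm]
    calc ∑ t, v t * g t
        = ∑ t, ((if t = 0 then a * g t else 0) + ((if t = 1 then b * g t else 0) +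
          (if t = -1 then c * g t else 0))) := Finset.sum_congr rfl (fun t _ => hsplit t)
      _ = a * g 0 + b * g 1 + c * g (-1) := by
          rw [Finset.sum_add_distrib, Finset.sum_add_distrib,
            Finset.sum_ite_eq' univ (0 : Fin n), Finset.sum_ite_eq' univ (1 : Fin n),
            Finset.sum_ite_eq' univ (-1 : Fin n)]
          simp [add_assoc]
  have hcomm : (Matrix.of fun i j => v (j - i)) * F = F * Matrix.diagonal d := by
    ext i k
    rw [Matrix.mul_apply, Matrix.mul_diagonal, hF]
    have step1 : ∑ j, (Matrix.of fun i j => v (j - i)) i j * F j k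
        = ∑ t, v t * E ((i + t) * k) := by
      refine (Fintype.sum_equiv (Equiv.addLeft i) _ _ ?_).symm
      intro t
      simp only [Equiv.coe_addLeft, Matrix.of_apply, hF]
      rw [add_sub_cancel_left]
    rw [step1]
    calc ∑ t, v t * E ((i + t) * k)
        = ∑ t, v t * (E (i * k) * E (t * k)) := by
          exact Finset.sum_congr rfl fun t _ => by rw [add_mul, hEadd]
      _ = a * (E (i * k) * E ((0 : Fin n) * k)) + b * (E (i * k) * E (1 * k))
          + c * (E (i * k) * E (-1 * k)) := sum_v _
      _ = E (i * k) * d k := by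
          rw [hddef]
          simp only [zero_mul, one_mul, neg_one_mul, hE0]
          ring
  have hdetF : F.det ≠ 0 := by
    rw [hFdef, Matrix.det_vandermonde]
    refine Finset.prod_ne_zero_iff.mpr fun i _ => Finset.prod_ne_zero_iff.mpr
      fun j hj => sub_ne_zero.mpr fun hEq => ?_
    have hij : i < j := Finset.mem_Ioi.mp hj
    have h2 : (i : ℕ) < (j : ℕ) := hij
    have h3 := hω.pow_inj j.isLt i.isLt hEq
    omega
  have hdet : (Matrix.of fun i j : Fin n => v (j - i)).det = ∏ k, d k := by
    have h2 := congrArg Matrix.det hcomm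
    rw [Matrix.det_mul, Matrix.det_mul, Matrix.det_diagonal] at h2
    exact mul_right_cancel₀ hdetF (h2.trans (mul_comm _ _))
  rw [hdet]
  have hroots := prod_z_sub hn0 hω
  have L1 : ∀ u w : ℂ, ∏ k : Fin n, (u + w * E k) = u ^ n - (-w) ^ n := by
    intro u w
    by_cases hw : w = 0
    · simp [hw, Finset.prod_const, Finset.card_univ, hn0.ne', zero_pow]
    · have hstep : ∀ k : Fin n, u + w * E k = (-w) * ((-u / w) - ω ^ (k : ℕ)) := by
        intro k
        simp only [hEdef]
        field_simp
        ring
      rw [Finset.prod_congr rfl (fun k _ => hstep k), Finset.prod_mul_distrib,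
        Finset.prod_const, Finset.card_univ, Fintype.card_fin, hroots]
      rw [mul_sub, mul_one, ← mul_pow]
      have huw : -w * (-u / w) = u := by field_simp
      rw [huw]
  have L2 : ∏ k : Fin n, E k = (-1 : ℂ) ^ (n + 1) := by
    have h := hroots 0
    simp only [zero_sub] at h
    have h2 : ∏ k : Fin n, -(ω ^ (k : ℕ)) = (-1 : ℂ) ^ n * ∏ k : Fin n, E k := by
      rw [Finset.prod_congr rfl (fun (k : Fin n) (_ : k ∈ univ) =>
        (neg_one_mul (E k)).symm), Finset.prod_mul_distrib, Finset.prod_const,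
        Finset.card_univ, Fintype.card_fin]
    rw [h2, zero_pow hn0.ne', zero_sub] at h
    have hne : ((-1 : ℂ)) ^ n ≠ 0 := pow_ne_zero _ (by norm_num)
    apply mul_left_cancel₀ hne
    rw [h, ← pow_add]
    rw [show n + (n + 1) = 2 * n + 1 by ring, pow_succ, pow_mul, neg_one_sq, one_pow, one_mul]
  by_cases hb : b = 0
  · have hx : x1 = 0 ∨ x2 = 0 := mul_eq_zero.mp (by rw [hprod, hb, zero_mul])
    have hprodd : ∏ k, d k = ∏ k : Fin n, (a + c * E k) := by
      rw [← Equiv.prod_comp (Equiv.neg (Fin n)) (fun k => a + c * E k)]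
      refine Finset.prod_congr rfl fun k _ => ?_
      simp [hddef, hb, Equiv.neg_apply]
    rw [hprodd, L1]
    rcases hx with h | h
    · have ha : a = x2 := by rw [← hsum, h, zero_add]
      rw [ha, h, hb, zero_pow hn0.ne', neg_pow c n, pow_succ]
      ring
    · have ha : a = x1 := by rw [← hsum, h, add_zero]
      rw [ha, h, hb, zero_pow hn0.ne', neg_pow c n, pow_succ]
      ring
  · have hfac : ∀ k : Fin n, d k * (b * E k) = (x1 + b * E k) * (x2 + b * E k) := by
      intro k
      have hEk : E k * E (-k) = 1 := by rw [← hEadd, add_neg_cancel, hE0]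
      simp only [hddef]
      linear_combination (-(b * E k)) * hsum - hprod + (b * c) * hEk
    have hprodeq := Finset.prod_congr rfl (fun k (_ : k ∈ (univ : Finset (Fin n))) => hfac k)
    simp only [Finset.prod_mul_distrib] at hprodeq
    rw [Finset.prod_const, Finset.card_univ, Fintype.card_fin, L2, L1, L1] at hprodeq
    have hne : (b ^ n * (-1 : ℂ) ^ (n + 1)) ≠ 0 :=
      mul_ne_zero (pow_ne_zero _ hb) (pow_ne_zero _ (by norm_num))
    apply mul_right_cancel₀ hne
    rw [← mul_assoc] at hprodeq
    rw [← mul_assoc, hprodeq]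
    have hx : x1 ^ n * x2 ^ n = b ^ n * c ^ n := by rw [← mul_pow, hprod, mul_pow]
    have hs : (-1 : ℂ) ^ n * (-1 : ℂ) ^ n = 1 := by
      rw [← pow_add, ← two_mul, pow_mul, neg_one_sq, one_pow]
    rw [neg_pow b, pow_succ]
    linear_combination hx - (b ^ n * c ^ n) * hs
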